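/- For every real β with 1 < β ≤ 2 and every x ∈ [0,1], the β-expansion generated by the beta shift reconstructs x: x = (1/2) · Σ_{n=0}^∞ k_n(x) · β^{−n}. -/

import Mathlib

/-- The beta shift map `T_β : [0,1] → [0,1]`. -/
noncomputable def betaShift (β : ℝ) (x : ℝ) : ℝ :=
  if x < 1/2 then β * x else β * (x - 1/2)

/-- The digit sequence `k_n(x)` of the beta shift: 0 if the n-th iterate is below 1/2, else 1. -/
noncomputable def betaDigit (β : ℝ) (n : ℕ) (x : ℝ) : ℝ :=
  if (betaShift β)^[n] x < 1/2 then 0 else 1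

/-- the β-expansion generated by the beta shift reconstructs `x`. -/
theorem beta_expansion_reconstructs (β : ℝ) (hβ1 : 1 < β) (hβ2 : β ≤ 2)
    (x : ℝ) (hx0 : 0 ≤ x) (hx1 : x ≤ 1) :
    x = (1/2) * ∑' n : ℕ, betaDigit β n x / β ^ n := by
  have hβ0 : 0 < β := lt_trans one_pos hβ1
  set y : ℕ → ℝ := fun n => (betaShift β)^[n] x with hy
  -- invariant: y n ∈ [0,1]
  have hmem : ∀ n, 0 ≤ y n ∧ y n ≤ 1 := by
    intro n
    induction n with
    | zero => exact ⟨hx0, hx1⟩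
    | succ n ih =>
      have hstep : y (n+1) = betaShift β (y n) := by
        simp [hy, Function.iterate_succ_apply']
      rw [hstep]
      unfold betaShift
      rcases ih with ⟨h0, h1⟩
      split_ifs with h
      · refine ⟨by positivity, ?_⟩
        nlinarith [mul_le_mul hβ2 (le_of_lt h) h0 (by norm_num : (0:ℝ) ≤ 2)]
      · push_neg at h
        refine ⟨by nlinarith, ?_⟩
        nlinarith [mul_le_mul hβ2 (by linarith : y n - 1/2 ≤ 1/2) (by linarith : (0:ℝ) ≤ y n - 1/2) (by norm_num : (0:ℝ) ≤ 2)]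
  -- recursion: y n = betaDigit n / 2 + y (n+1) / β
  have hrec : ∀ n, y n = betaDigit β n x / 2 + y (n+1) / β := by
    intro n
    have hstep : y (n+1) = betaShift β (y n) := by
      simp [hy, Function.iterate_succ_apply']
    have hit : (betaShift β)^[n] x = y n := rfl
    by_cases h : y n < 1/2
    · rw [betaDigit, hit, if_pos h, hstep, betaShift, if_pos h]
      field_simp
      ring
    · rw [betaDigit, hit, if_neg h, hstep, betaShift, if_neg h]
      field_simp
      ring
  -- partial sums
  have hpartial : ∀ N, x = (1/2) * (∑ i ∈ Finset.range N, betaDigit β i x / β ^ i)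
      + y N / β ^ N := by
    intro N
    induction N with
    | zero => simp [hy]
    | succ N ih =>
      rw [Finset.sum_range_succ]
      conv_lhs => rw [ih, hrec N]
      have hβn : (β:ℝ)^N ≠ 0 := by positivity
      field_simp
      ring
  have hd_nonneg : ∀ i, 0 ≤ betaDigit β i x / β ^ i := by
    intro i
    unfold betaDigit
    split_ifs <;> positivity
  -- tendsto: y N / β^N → 0
  have htend0 : Filter.Tendsto (fun N => y N / β ^ N) Filter.atTop (nhds 0) := by
    have hg : Filter.Tendsto (fun N : ℕ => (β⁻¹) ^ N) Filter.atTop (nhds 0) := by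
      apply tendsto_pow_atTop_nhds_zero_of_lt_one (by positivity)
      rw [inv_lt_one_iff₀]; right; exact hβ1
    rw [show (0:ℝ) = 0 by rfl]
    apply squeeze_zero (fun N => by
        have := (hmem N).1; positivity)
      (fun N => ?_) hg
    have h1 : y N / β ^ N ≤ 1 / β ^ N :=
      div_le_div_of_nonneg_right ?_ (by positivity) |>.trans_eq rfl
    · rw [one_div, ← inv_pow] at h1; exact h1
    · exact (hmem N).2
  have hsum : Filter.Tendsto (fun N => ∑ i ∈ Finset.range N, betaDigit β i x / β ^ i)
      Filter.atTop (nhds (2 * x)) := by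
    have : ∀ N, ∑ i ∈ Finset.range N, betaDigit β i x / β ^ i
        = 2 * (x - y N / β ^ N) := by
      intro N
      have := hpartial N
      linarith
    simp only [this]
    have : Filter.Tendsto (fun N => x - y N / β ^ N) Filter.atTop (nhds x) := by
      simpa using Filter.Tendsto.sub tendsto_const_nhds htend0
    simpa using this.const_mul 2
  have hHasSum : HasSum (fun i => betaDigit β i x / β ^ i) (2 * x) :=
    (hasSum_iff_tendsto_nat_of_nonneg hd_nonneg _).mpr hsum
  rw [hHasSum.tsum_eq]
  ring
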